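/- For every odd integer n ≥ 3, the twisted cube TQ_n is Hamiltonian. -/

import Mathlib

/-- Parity function `P i b = b_i ⊕ b_{i-1} ⊕ ... ⊕ b_0`. -/
def parityFn {n : ℕ} (b : Fin n → Bool) (i : ℕ) : Bool :=
  decide ((((List.range (i+1)).filter fun j => if h : j < n then b ⟨j, h⟩ else false).length) % 2 = 1)

/-- The low-order `2k+1` bits of a binary string of length `2(k+1)+1`. -/
def lowBits {k : ℕ} (b : Fin (2*(k+1)+1) → Bool) : Fin (2*k+1) → Bool :=
  fun i => b (Fin.castLE (by omega) i)

/-- The cross-edge relation in the twisted cube `TQ_{2(k+1)+1}`: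
`b'` is a cross-edge neighbor of `b`. -/
def crossRel (k : ℕ) (b b' : Fin (2*(k+1)+1) → Bool) : Prop :=
  lowBits b' = lowBits b ∧
  ((b' ⟨2*k+2, by omega⟩ = !b ⟨2*k+2, by omega⟩ ∧ b' ⟨2*k+1, by omega⟩ = b ⟨2*k+1, by omega⟩) ∨
   (parityFn b (2*k) = false ∧ b' ⟨2*k+2, by omega⟩ = !b ⟨2*k+2, by omega⟩ ∧
      b' ⟨2*k+1, by omega⟩ = !b ⟨2*k+1, by omega⟩) ∨
   (parityFn b (2*k) = true ∧ b' ⟨2*k+2, by omega⟩ = b ⟨2*k+2, by omega⟩ ∧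
      b' ⟨2*k+1, by omega⟩ = !b ⟨2*k+1, by omega⟩))

/-- The twisted cube `TQ_n` for odd `n = 2k+1`, on vertex set the binary
strings of length `n` (bit `i` of `b` is `b i`). -/
def TwistedCube : (k : ℕ) → SimpleGraph (Fin (2*k+1) → Bool)
  | 0 => ⊤
  | (k+1) =>
    { Adj := fun b b' => b ≠ b' ∧
        ((b ⟨2*k+2, by omega⟩ = b' ⟨2*k+2, by omega⟩ ∧ b ⟨2*k+1, by omega⟩ = b' ⟨2*k+1, by omega⟩ ∧
          (TwistedCube k).Adj (lowBits b) (lowBits b')) ∨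
         crossRel k b b' ∨ crossRel k b' b)
      symm := ⟨by
        rintro b b' ⟨hne, h⟩
        refine ⟨hne.symm, ?_⟩
        rcases h with ⟨h1, h2, h3⟩ | h | h
        · exact Or.inl ⟨h1.symm, h2.symm, (TwistedCube k).symm.symm _ _ h3⟩
        · exact Or.inr (Or.inr h)
        · exact Or.inr (Or.inl h)⟩
      loopless := ⟨fun b h => h.1 rfl⟩ }

open SimpleGraph

variable {V : Type*} {G : SimpleGraph V}

/-- Walk along a chain list. -/
def walkOfChain : ∀ (a : V) (l : List V), List.Chain G.Adj a l →
    G.Walk a ((a :: l).getLast (List.cons_ne_nil a l))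
  | _, [], _ => Walk.nil
  | a, b :: l, h =>
    (Walk.cons (List.chain_cons.mp h).1 (walkOfChain b l (List.chain_cons.mp h).2)).copy rfl
      (by rw [List.getLast_cons (List.cons_ne_nil b l)])

lemma walkOfChain_support : ∀ (a : V) (l : List V) (h : List.Chain G.Adj a l),
    (walkOfChain a l h).support = a :: l
  | _, [], _ => rfl
  | a, b :: l, h => by
    simp [walkOfChain, walkOfChain_support b l]
    exact walkOfChain_support b l _

lemma walkOfChain_length : ∀ (a : V) (l : List V) (h : List.Chain G.Adj a l),
    (walkOfChain a l h).length = l.length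
  | _, [], _ => rfl
  | a, b :: l, h => by
    simp [walkOfChain, walkOfChain_length b l]
    exact walkOfChain_length b l _

lemma no_back_edge {u v : V} (q : G.Walk u v) (hn : q.support.Nodup) (hl : 2 ≤ q.length) :
    s(v, u) ∉ q.edges := by
  cases q with
  | nil => simp
  | cons h q' =>
    rename_i w
    intro hmem
    rw [Walk.edges_cons, List.mem_cons] at hmem
    rw [Walk.support_cons, List.nodup_cons] at hn
    rcases hmem with heq | hmem
    · rw [Sym2.eq_iff] at heq
      rcases heq with ⟨hvu, huw⟩ | ⟨hvw, -⟩
      · exact hn.1 (hvu ▸ q'.end_mem_support)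
      · subst hvw
        have : q'.IsPath := Walk.IsPath.mk' hn.2
        rw [Walk.isPath_iff_eq_nil] at this
        subst this
        simp at hl
    · exact hn.1 (q'.snd_mem_support_of_mem_edges hmem)

/-- From a suitable list, a Hamiltonian cycle. -/
lemma isHamiltonian_of_list [DecidableEq V] [Fintype V] (u : V) (M : List V)
    (hnd : (u :: M).Nodup) (hcov : ∀ w : V, w ∈ u :: M)
    (hch : List.Chain G.Adj u M)
    (hadj : G.Adj ((u :: M).getLast (List.cons_ne_nil u M)) u)
    (hlen : 2 ≤ M.length) : G.IsHamiltonian := by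
  intro _
  set v := (u :: M).getLast (List.cons_ne_nil u M) with hv
  refine ⟨v, Walk.cons hadj (walkOfChain u M hch), ?_⟩
  have hsupp : (walkOfChain (G := G) u M hch).support = u :: M := walkOfChain_support u M hch
  have hpath : (walkOfChain (G := G) u M hch).IsPath := Walk.IsPath.mk' (by rw [hsupp]; exact hnd)
  have hnb : s(v, u) ∉ (walkOfChain (G := G) u M hch).edges :=
    no_back_edge _ (by rw [hsupp]; exact hnd) (by rw [walkOfChain_length]; exact hlen)
  rw [Walk.isHamiltonianCycle_iff_isCycle_and_support_count_tail_eq_one]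
  constructor
  · exact Path.cons_isCycle ⟨_, hpath⟩ hadj hnb
  · intro a
    rw [Walk.support_cons, List.tail_cons, hsupp]
    exact List.count_eq_one_of_mem hnd (hcov a)

/-- Extend a length `2k+1` string by two top bits: bit `2k+2 := a`, bit `2k+1 := c`. -/
def ext {k : ℕ} (a c : Bool) (x : Fin (2*k+1) → Bool) : Fin (2*(k+1)+1) → Bool :=
  fun i => if h : i.val < 2*k+1 then x ⟨i.val, h⟩ else if i.val = 2*k+1 then c else a

lemma lowBits_ext {k : ℕ} (a c : Bool) (x : Fin (2*k+1) → Bool) : lowBits (ext a c x) = x := by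
  funext i
  simp only [lowBits, ext, Fin.castLE]
  rw [dif_pos i.isLt]

lemma ext_top {k : ℕ} (a c : Bool) (x : Fin (2*k+1) → Bool) :
    ext a c x ⟨2*k+2, by omega⟩ = a := by
  simp only [ext]
  rw [dif_neg (by omega), if_neg (by omega)]

lemma ext_snd {k : ℕ} (a c : Bool) (x : Fin (2*k+1) → Bool) :
    ext a c x ⟨2*k+1, by omega⟩ = c := by
  simp only [ext]
  rw [dif_neg (by omega)]
  simp

lemma ext_eq_self {k : ℕ} (b : Fin (2*(k+1)+1) → Bool) :
    b = ext (b ⟨2*k+2, by omega⟩) (b ⟨2*k+1, by omega⟩) (lowBits b) := by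
  funext i
  simp only [ext, lowBits, Fin.castLE]
  by_cases h : i.val < 2*k+1
  · rw [dif_pos h]
  · rw [dif_neg h]
    by_cases h2 : i.val = 2*k+1
    · rw [if_pos h2]; congr 1; exact Fin.ext h2
    · rw [if_neg h2]; congr 1; refine Fin.ext ?_; show i.val = 2*k+2; have := i.isLt; omega

lemma ext_inj {k : ℕ} {a c a' c' : Bool} {x x' : Fin (2*k+1) → Bool}
    (h : ext a c x = ext a' c' x') : a = a' ∧ c = c' ∧ x = x' := by
  refine ⟨?_, ?_, ?_⟩
  · rw [← ext_top a c x, ← ext_top a' c' x', h]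
  · rw [← ext_snd a c x, ← ext_snd a' c' x', h]
  · rw [← lowBits_ext a c x, ← lowBits_ext a' c' x', h]

lemma parity_ext_low {k : ℕ} (a c : Bool) (x : Fin (2*k+1) → Bool) {i : ℕ} (hi : i < 2*k+1) :
    parityFn (ext a c x) i = parityFn x i := by
  have hfil : List.filter (fun j => if h : j < 2*(k+1)+1 then ext a c x ⟨j, h⟩ else false)
      (List.range (i+1)) =
      List.filter (fun j => if h : j < 2*k+1 then x ⟨j, h⟩ else false) (List.range (i+1)) := by
    apply List.filter_congr
    intro j hj
    rw [List.mem_range] at hj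
    have hj1 : j < 2*k+1 := by omega
    have hj2 : j < 2*(k+1)+1 := by omega
    rw [dif_pos hj2, dif_pos hj1]
    simp only [ext]
    rw [dif_pos hj1]
  simp only [parityFn]
  rw [hfil]

lemma parity_ext_ff {k : ℕ} (x : Fin (2*k+1) → Bool) :
    parityFn (ext false false x) (2*(k+1)) = parityFn x (2*k) := by
  have hr : List.range (2*(k+1)+1) = List.range (2*k+1) ++ [2*k+1, 2*k+2] := by
    have h1 : 2*(k+1)+1 = (2*k+1) + 1 + 1 := by omega
    rw [h1, List.range_succ, List.range_succ]
    simp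
  simp only [parityFn]
  rw [hr, List.filter_append]
  have e1 : ∀ j, j = 2*k+1 ∨ j = 2*k+2 →
      (if h : j < 2*(k+1)+1 then ext false false x ⟨j, h⟩ else false) = false := by
    intro j hj
    rw [dif_pos (by omega)]
    simp only [ext]
    rcases hj with rfl | rfl
    · rw [dif_neg (by omega), if_pos rfl]
    · rw [dif_neg (by omega), if_neg (by omega)]
  have e2 : List.filter (fun j => if h : j < 2*(k+1)+1 then ext false false x ⟨j, h⟩ else false)
      [2*k+1, 2*k+2] = [] := by
    simp only [List.filter_cons, List.filter_nil]
    rw [e1 (2*k+1) (Or.inl rfl), e1 (2*k+2) (Or.inr rfl)]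
    simp
  rw [e2, List.append_nil]
  have hfil : List.filter (fun j => if h : j < 2*(k+1)+1 then ext false false x ⟨j, h⟩ else false)
      (List.range (2*k+1)) =
      List.filter (fun j => if h : j < 2*k+1 then x ⟨j, h⟩ else false) (List.range (2*k+1)) := by
    apply List.filter_congr
    intro j hj
    rw [List.mem_range] at hj
    rw [dif_pos (by omega : j < 2*(k+1)+1), dif_pos (by omega : j < 2*k+1)]
    simp only [ext]
    rw [dif_pos (by omega : j < 2*k+1)]
  rw [hfil]

lemma twistedCube_succ_adj (k : ℕ) (b b' : Fin (2*(k+1)+1) → Bool) :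
    (TwistedCube (k+1)).Adj b b' ↔ (b ≠ b' ∧
        ((b ⟨2*k+2, by omega⟩ = b' ⟨2*k+2, by omega⟩ ∧ b ⟨2*k+1, by omega⟩ = b' ⟨2*k+1, by omega⟩ ∧
          (TwistedCube k).Adj (lowBits b) (lowBits b')) ∨
         crossRel k b b' ∨ crossRel k b' b)) := Iff.rfl

lemma ext_ne_of_ne {k : ℕ} {a c a' c' : Bool} {x x' : Fin (2*k+1) → Bool}
    (h : a ≠ a' ∨ c ≠ c' ∨ x ≠ x') : ext a c x ≠ ext a' c' x' := by
  intro he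
  obtain ⟨h1, h2, h3⟩ := ext_inj he
  tauto

lemma adj_ext_of_adj {k : ℕ} (a c : Bool) {x y : Fin (2*k+1) → Bool}
    (h : (TwistedCube k).Adj x y) :
    (TwistedCube (k+1)).Adj (ext a c x) (ext a c y) := by
  rw [twistedCube_succ_adj]
  refine ⟨ext_ne_of_ne (Or.inr (Or.inr h.ne)), Or.inl ?_⟩
  rw [ext_top, ext_top, ext_snd, ext_snd, lowBits_ext, lowBits_ext]
  exact ⟨rfl, rfl, h⟩

lemma adj_ext_flip_top {k : ℕ} (a c : Bool) (x : Fin (2*k+1) → Bool) :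
    (TwistedCube (k+1)).Adj (ext a c x) (ext (!a) c x) := by
  rw [twistedCube_succ_adj]
  refine ⟨ext_ne_of_ne (Or.inl (by simp)), Or.inr (Or.inl ?_)⟩
  refine ⟨by rw [lowBits_ext, lowBits_ext], Or.inl ?_⟩
  rw [ext_top, ext_top, ext_snd, ext_snd]
  exact ⟨rfl, rfl⟩

lemma adj_ext_flip_snd {k : ℕ} (a c : Bool) {x : Fin (2*k+1) → Bool}
    (hp : parityFn x (2*k) = true) :
    (TwistedCube (k+1)).Adj (ext a c x) (ext a (!c) x) := by
  rw [twistedCube_succ_adj]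
  refine ⟨ext_ne_of_ne (Or.inr (Or.inl (by simp))), Or.inr (Or.inl ?_)⟩
  refine ⟨by rw [lowBits_ext, lowBits_ext], Or.inr (Or.inr ?_)⟩
  rw [ext_top, ext_top, ext_snd, ext_snd]
  refine ⟨?_, rfl, rfl⟩
  rw [parity_ext_low a c x (by omega)]
  exact hp
lemma ext_injective {k : ℕ} (a c : Bool) : Function.Injective (ext (k := k) a c) :=
  fun _ _ h => (ext_inj h).2.2

lemma disjoint_ext {k : ℕ} {a c a' c' : Bool} (h : ¬(a = a' ∧ c = c'))
    (l1 l2 : List (Fin (2*k+1) → Bool)) :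
    List.Disjoint (l1.map (ext a c)) (l2.map (ext a' c')) := by
  intro w h1 h2
  rw [List.mem_map] at h1 h2
  obtain ⟨x, -, rfl⟩ := h1
  obtain ⟨y, -, hy⟩ := h2
  obtain ⟨h1, h2, -⟩ := ext_inj hy
  exact h ⟨h1.symm, h2.symm⟩

lemma key : ∀ k : ℕ, ∃ (u : Fin (2*k+1) → Bool) (M : List (Fin (2*k+1) → Bool)),
    (u :: M).Nodup ∧ (∀ w, w ∈ u :: M) ∧ List.Chain' (TwistedCube k).Adj (u :: M) ∧
    parityFn u (2*k) = true ∧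
    (TwistedCube k).Adj ((u :: M).getLast (List.cons_ne_nil u M)) u := by
  intro k
  induction k with
  | zero =>
    refine ⟨(fun _ => true), [(fun _ => false)], ?_, ?_, ?_, ?_, ?_⟩
    · simp only [List.nodup_cons, List.mem_singleton, List.not_mem_nil, not_false_iff,
        List.nodup_nil, and_true]
      intro h
      exact absurd (congrFun h ⟨0, by omega⟩) (by simp)
    · intro w
      have : w = (fun _ => true) ∨ w = (fun _ => false) := by
        rcases h : w ⟨0, by omega⟩ with - | -
        · right; funext i
          have hi : i = ⟨0, by omega⟩ := by
            refine Fin.ext ?_; have := i.isLt; omega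
          rw [hi, h]
        · left; funext i
          have hi : i = ⟨0, by omega⟩ := by
            refine Fin.ext ?_; have := i.isLt; omega
          rw [hi, h]
      rcases this with rfl | rfl <;> simp
    · refine List.isChain_cons_cons.mpr ⟨?_, List.isChain_singleton _⟩
      show (⊤ : SimpleGraph _).Adj _ _
      simp only [SimpleGraph.top_adj]
      intro h
      exact absurd (congrFun h ⟨0, by omega⟩) (by simp)
    · decide
    · show (⊤ : SimpleGraph _).Adj _ _
      simp only [SimpleGraph.top_adj]
      intro h
      exact absurd (congrFun h ⟨0, by omega⟩) (by simp)
  | succ k ih =>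
    obtain ⟨u, M, hnd, hcov, hch, hpar, hlast⟩ := ih
    set L : List (Fin (2*k+1) → Bool) := u :: M with hL
    have hLne : L ≠ [] := List.cons_ne_nil u M
    set v : Fin (2*k+1) → Bool := L.getLast hLne with hv
    have hvL : L.getLast? = some v := List.getLast?_eq_getLast hLne
    have huL : L.head? = some u := rfl
    have hchL : List.Chain' (TwistedCube k).Adj L := hch
    have hchR : List.Chain' (TwistedCube k).Adj L.reverse := by
      refine List.isChain_reverse.mpr ?_
      exact hchL.imp fun a b h => h.symm
    refine ⟨ext false false u,
      M.map (ext false false) ++ (L.reverse.map (ext true false) ++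
        (L.map (ext true true) ++ L.reverse.map (ext false true))), ?_, ?_, ?_, ?_, ?_⟩
    · show (L.map (ext false false) ++ (L.reverse.map (ext true false) ++
        (L.map (ext true true) ++ L.reverse.map (ext false true)))).Nodup
      have ndL := hnd
      have ndR : L.reverse.Nodup := List.nodup_reverse.mpr hnd
      rw [List.nodup_append', List.nodup_append', List.nodup_append']
      refine ⟨ndL.map (ext_injective _ _), ⟨ndR.map (ext_injective _ _),
        ⟨ndL.map (ext_injective _ _), ndR.map (ext_injective _ _),
          disjoint_ext (by simp) _ _⟩, ?_⟩, ?_⟩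
      · rw [List.disjoint_append_right]
        exact ⟨disjoint_ext (by simp) _ _, disjoint_ext (by simp) _ _⟩
      · rw [List.disjoint_append_right, List.disjoint_append_right]
        exact ⟨disjoint_ext (by simp) _ _,
          disjoint_ext (by simp) _ _, disjoint_ext (by simp) _ _⟩
    · intro w
      show w ∈ L.map (ext false false) ++ (L.reverse.map (ext true false) ++
        (L.map (ext true true) ++ L.reverse.map (ext false true)))
      have hw := ext_eq_self w
      have hlow : lowBits w ∈ L := hcov _
      simp only [List.mem_append, List.mem_map, List.mem_reverse]
      rcases h2 : w ⟨2*k+2, by omega⟩ with - | - <;> rcases h1 : w ⟨2*k+1, by omega⟩ with - | - <;>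
        rw [h2, h1] at hw
      · exact Or.inl ⟨lowBits w, hlow, hw.symm⟩
      · exact Or.inr (Or.inr (Or.inr ⟨lowBits w, hlow, hw.symm⟩))
      · exact Or.inr (Or.inl ⟨lowBits w, hlow, hw.symm⟩)
      · exact Or.inr (Or.inr (Or.inl ⟨lowBits w, hlow, hw.symm⟩))
    · show List.Chain' (TwistedCube (k+1)).Adj (L.map (ext false false) ++
        (L.reverse.map (ext true false) ++
          (L.map (ext true true) ++ L.reverse.map (ext false true))))
      have c00 : List.Chain' (TwistedCube (k+1)).Adj (L.map (ext false false)) :=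
        List.isChain_map_of_isChain _ (fun x y h => adj_ext_of_adj _ _ h) hchL
      have c10 : List.Chain' (TwistedCube (k+1)).Adj (L.reverse.map (ext true false)) :=
        List.isChain_map_of_isChain _ (fun x y h => adj_ext_of_adj _ _ h) hchR
      have c11 : List.Chain' (TwistedCube (k+1)).Adj (L.map (ext true true)) :=
        List.isChain_map_of_isChain _ (fun x y h => adj_ext_of_adj _ _ h) hchL
      have c01 : List.Chain' (TwistedCube (k+1)).Adj (L.reverse.map (ext false true)) :=
        List.isChain_map_of_isChain _ (fun x y h => adj_ext_of_adj _ _ h) hchR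
      refine List.IsChain.append ?_ ?_ ?_
      · exact c00
      · refine List.IsChain.append c10 (List.IsChain.append c11 c01 ?_) ?_
        · -- junction f11 v -- f01 v
          intro x hx y hy
          rw [List.getLast?_map, hvL] at hx
          rw [List.head?_map, List.head?_reverse, hvL] at hy
          simp only [Option.map_some, Option.mem_def, Option.some.injEq] at hx hy
          subst hx; subst hy
          exact adj_ext_flip_top true true v
        · -- junction f10 u -- f11 u
          intro x hx y hy
          rw [List.getLast?_map, List.getLast?_reverse, huL] at hx
          rw [List.head?_append, List.head?_map, huL] at hy
          simp only [Option.map_some, Option.mem_def, Option.some.injEq, Option.or_some] at hx hy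
          subst hx
          cases hy
          exact adj_ext_flip_snd true false hpar
      · -- junction f00 v -- f10 v
        intro x hx y hy
        rw [List.getLast?_map, hvL] at hx
        rw [List.head?_append, List.head?_map, List.head?_reverse, hvL] at hy
        simp only [Option.map_some, Option.mem_def, Option.some.injEq, Option.or_some] at hx hy
        subst hx
        cases hy
        exact adj_ext_flip_top false false v
    · rw [parity_ext_ff]; exact hpar
    · have hgl : (L.map (ext false false) ++ (L.reverse.map (ext true false) ++
          (L.map (ext true true) ++ L.reverse.map (ext false true)))).getLast? =
          some (ext false true u) := by
        rw [List.getLast?_append, List.getLast?_append, List.getLast?_append,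
          List.getLast?_map, List.getLast?_reverse, huL]
        rfl
      have hx : ∀ (h : ((ext false false u) :: (M.map (ext false false) ++
          (L.reverse.map (ext true false) ++
            (L.map (ext true true) ++ L.reverse.map (ext false true))))) ≠ []),
          ((ext false false u) :: (M.map (ext false false) ++ (L.reverse.map (ext true false) ++
            (L.map (ext true true) ++ L.reverse.map (ext false true))))).getLast h =
            ext false true u := by
        intro h
        have h5 := List.getLast?_eq_getLast h
        exact Option.some_injective _ (h5.symm.trans hgl)
      rw [hx]
      exact (adj_ext_flip_snd false false hpar).symm

/-- For every odd `n = 2k+1 ≥ 3`, the twisted cube `TQ_n` is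
Hamiltonian. -/
theorem twistedCube_isHamiltonian (k : ℕ) (hk : 1 ≤ k) :
    (TwistedCube k).IsHamiltonian := by
  obtain ⟨u, M, hnd, hcov, hch, -, hlast⟩ := key k
  refine isHamiltonian_of_list u M hnd hcov hch hlast ?_
  have htf : (u :: M).toFinset = Finset.univ := by
    apply Finset.eq_univ_iff_forall.mpr
    intro w; rw [List.mem_toFinset]; exact hcov w
  have hcard : (u :: M).length = Fintype.card (Fin (2*k+1) → Bool) := by
    rw [← List.toFinset_card_of_nodup hnd, htf, Finset.card_univ]
  rw [Fintype.card_fun, Fintype.card_bool, Fintype.card_fin] at hcard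
  have h8 : 2^3 ≤ 2^(2*k+1) := Nat.pow_le_pow_right (by norm_num) (by omega)
  simp only [List.length_cons] at hcard
  omega
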